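/- Let (a_{i,j}) be an m×m integer matrix, (λ_i) a canon with transversal maxima along permutation σ, and suppose row k of the matrix (∂-pattern) is modified to a new row (a*_{k,j}) satisfying a*_{k,j} < α_k + β_j for all j (where α_i = Λ − λ_i, β_j = max_i(a_{i,j} − α_i)). Then the Jacobi number of the modified matrix A* is strictly less than the Jacobi number of A, provided the canon's transversal maxima include position (k, σ(k)) with a_{k,σ(k)} = α_k + β_{σ(k)}. -/

import Mathlib

/-- If `lam` is a canon for `A` with transversal maxima along `σ` (with cover
`α i = Λ - lam i`, `β j = max_i (A i j - α i)`, tight at `(k, σ k)`), and the matrix `A*`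
agrees with `A` except on row `k`, where all its entries satisfy the strict inequality
`A* k j < α k + β j`, then the Jacobi number of `A*` is strictly less than that of `A`. -/
theorem jacobi_number_decreases {m : ℕ} (hm : 0 < m)
    (A Astar : Matrix (Fin m) (Fin m) ℤ) (lam : Fin m → ℕ) (σ : Equiv.Perm (Fin m))
    (k : Fin m)
    (hcanon : ∀ i i' : Fin m, A i' (σ i) + (lam i' : ℤ) ≤ A i (σ i) + (lam i : ℤ)) :
    let Λ : ℕ := Finset.univ.sup lam
    let α : Fin m → ℕ := fun i => Λ - lam i
    let β : Fin m → ℤ := fun j =>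
      Finset.univ.sup' ⟨⟨0, hm⟩, Finset.mem_univ _⟩ (fun i => A i j - (α i : ℤ))
    (∀ j, Astar k j < (α k : ℤ) + β j) →
    (∀ i, i ≠ k → Astar i = A i) →
    A k (σ k) = (α k : ℤ) + β (σ k) →
    Finset.univ.sup' ⟨1, Finset.mem_univ 1⟩
        (fun τ : Equiv.Perm (Fin m) => ∑ i, Astar i (τ i)) <
      Finset.univ.sup' ⟨1, Finset.mem_univ 1⟩
        (fun τ : Equiv.Perm (Fin m) => ∑ i, A i (τ i)) := by
  intro Λ α β hstar hrow htight
  have hαcast : ∀ i, (α i : ℤ) = (Λ : ℤ) - (lam i : ℤ) := by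
    intro i
    have : lam i ≤ Λ := Finset.le_sup (Finset.mem_univ i)
    simp [α, Nat.cast_sub this]
  have hβle : ∀ i j, A i j - (α i : ℤ) ≤ β j := fun i j =>
    Finset.le_sup' (fun i => A i j - (α i : ℤ)) (Finset.mem_univ i)
  have hdiag : ∀ i, A i (σ i) = (α i : ℤ) + β (σ i) := by
    intro i
    have h1 : β (σ i) ≤ A i (σ i) - (α i : ℤ) := by
      apply Finset.sup'_le
      intro i' _
      have := hcanon i i'
      rw [hαcast i, hαcast i']
      linarith
    have h2 := hβle i (σ i)
    linarith [le_antisymm h1 h2]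
  set S : ℤ := (∑ i, (α i : ℤ)) + ∑ j, β j with hS
  have hsum : ∀ τ : Equiv.Perm (Fin m), (∑ i, ((α i : ℤ) + β (τ i))) = S := by
    intro τ
    rw [Finset.sum_add_distrib, hS]
    congr 1
    exact Fintype.sum_equiv τ _ _ (fun i => rfl)
  have hright : S ≤ Finset.univ.sup' ⟨1, Finset.mem_univ 1⟩
      (fun τ : Equiv.Perm (Fin m) => ∑ i, A i (τ i)) := by
    refine le_trans ?_ (Finset.le_sup' _ (Finset.mem_univ σ))
    rw [← hsum σ]
    exact le_of_eq (Finset.sum_congr rfl fun i _ => (hdiag i).symm)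
  refine lt_of_lt_of_le ?_ hright
  refine (Finset.sup'_lt_iff ..).mpr ?_
  intro τ _
  calc ∑ i, Astar i (τ i) < ∑ i, ((α i : ℤ) + β (τ i)) := by
        apply Finset.sum_lt_sum
        · intro i _
          by_cases hik : i = k
          · exact le_of_lt (hik ▸ hstar (τ i))
          · rw [hrow i hik]
            linarith [hβle i (τ i)]
        · exact ⟨k, Finset.mem_univ k, hstar (τ k)⟩
    _ = S := hsum τ
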